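/- arXiv:1605.06181 — 7 statements merged into one kernel-verified Lean document; each statement's English description precedes it below -/
import Mathlib

section
/- Fix p ≥ 0 and c > 0. The function E(ξ) = (1/c) · log(1 + 1/ξ) · (p · e^c · e^{-ξ} + 1) is strictly antitone (strictly decreasing) on the interval (0, ∞). Consequently, for ξ₁, ξ₂ > 0, if E(ξ₁) < E(ξ₂) then ξ₁ > ξ₂; i.e., the variational parameter ξ^min decreases monotonically as the expected finding-degree E[|π(f)|] increases. (Proposition 1) -/
/-- Proposition 1: for fixed `p ≥ 0` and `c > 0`, the expected finding-degree
`E(ξ) = (1/c) · log(1 + 1/ξ) · (p · e^c · e^{-ξ} + 1)` is strictly decreasing on `(0, ∞)`;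
consequently `E ξ₁ < E ξ₂` forces `ξ₁ > ξ₂` for positive `ξ₁, ξ₂`. -/
theorem stmt_0 (p c : ℝ) (hp : 0 ≤ p) (hc : 0 < c) :
    StrictAntiOn
      (fun ξ : ℝ => (1 / c) * Real.log (1 + 1 / ξ) * (p * Real.exp c * Real.exp (-ξ) + 1))
      (Set.Ioi 0) ∧
    ∀ ξ₁ ξ₂ : ℝ, 0 < ξ₁ → 0 < ξ₂ →
      (1 / c) * Real.log (1 + 1 / ξ₁) * (p * Real.exp c * Real.exp (-ξ₁) + 1) <
        (1 / c) * Real.log (1 + 1 / ξ₂) * (p * Real.exp c * Real.exp (-ξ₂) + 1) →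
      ξ₁ > ξ₂ := by
  have hanti : StrictAntiOn
      (fun ξ : ℝ => (1 / c) * Real.log (1 + 1 / ξ) * (p * Real.exp c * Real.exp (-ξ) + 1))
      (Set.Ioi 0) := by
    intro x hx y hy hxy
    simp only [Set.mem_Ioi] at hx hy
    have hlogpos : ∀ z : ℝ, 0 < z → 0 < Real.log (1 + 1 / z) := by
      intro z hz
      apply Real.log_pos
      linarith [one_div_pos.mpr hz]
    have hloglt : Real.log (1 + 1 / y) < Real.log (1 + 1 / x) := by
      apply Real.log_lt_log (by linarith [one_div_pos.mpr hy])
      have : 1 / y < 1 / x := one_div_lt_one_div_of_lt hx hxy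
      linarith
    have hgle : p * Real.exp c * Real.exp (-y) + 1 ≤ p * Real.exp c * Real.exp (-x) + 1 := by
      have : Real.exp (-y) ≤ Real.exp (-x) := Real.exp_le_exp.mpr (by linarith)
      have h2 : p * Real.exp c * Real.exp (-y) ≤ p * Real.exp c * Real.exp (-x) :=
        mul_le_mul_of_nonneg_left this (by positivity)
      linarith
    have hgpos : 0 < p * Real.exp c * Real.exp (-x) + 1 := by
      positivity
    have hgypos : 0 < p * Real.exp c * Real.exp (-y) + 1 := by
      positivity
    have hkey : Real.log (1 + 1 / y) * (p * Real.exp c * Real.exp (-y) + 1) <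
        Real.log (1 + 1 / x) * (p * Real.exp c * Real.exp (-x) + 1) := by
      calc Real.log (1 + 1 / y) * (p * Real.exp c * Real.exp (-y) + 1)
          ≤ Real.log (1 + 1 / y) * (p * Real.exp c * Real.exp (-x) + 1) := by
            exact mul_le_mul_of_nonneg_left hgle (le_of_lt (hlogpos y hy))
        _ < Real.log (1 + 1 / x) * (p * Real.exp c * Real.exp (-x) + 1) := by
            exact mul_lt_mul_of_pos_right hloglt hgpos
    have hc' : 0 < 1 / c := one_div_pos.mpr hc
    have h := mul_lt_mul_of_pos_left hkey hc'
    simp only []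
    nlinarith [h]
  refine ⟨hanti, ?_⟩
  intro ξ₁ ξ₂ h1 h2 hlt
  by_contra h
  push_neg at h
  rcases lt_or_eq_of_le h with h' | h'
  · have := hanti (Set.mem_Ioi.mpr h1) (Set.mem_Ioi.mpr h2) h'
    simp only at this
    linarith
  · rw [h'] at hlt; linarith
end

section
/- For every x > 0 and every ξ > 0, log(1 − e^{−x}) ≤ ξ·x + ξ·log ξ − (ξ+1)·log(ξ+1); equivalently, 1 − e^{−x} ≤ exp(ξ·x − f*(ξ)). -/
/-- The Jaakkola–Jordan variational upper bound: for `x > 0` and `ξ > 0`,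
`log(1 − e^{−x}) ≤ ξ·x + ξ·log ξ − (ξ+1)·log(ξ+1)`; equivalently
`1 − e^{−x} ≤ exp(ξ·x − f*(ξ))` with `f*(ξ) = −ξ·log ξ + (ξ+1)·log(ξ+1)`. -/
theorem stmt_3 :
    ∀ x : ℝ, 0 < x → ∀ ξ : ℝ, 0 < ξ →
      Real.log (1 - Real.exp (-x)) ≤
          ξ * x + ξ * Real.log ξ - (ξ + 1) * Real.log (ξ + 1) ∧
      1 - Real.exp (-x) ≤
          Real.exp (ξ * x - (-(ξ * Real.log ξ) + (ξ + 1) * Real.log (ξ + 1))) := by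
  intro x hx ξ hξ
  set t := Real.exp (-x) with ht
  have ht0 : 0 < t := Real.exp_pos _
  have ht1 : t < 1 := by
    rw [ht, Real.exp_lt_one_iff]; linarith
  have h1t : 0 < 1 - t := by linarith
  have hξ1 : 0 < ξ + 1 := by linarith
  have hlogt : Real.log t = -x := Real.log_exp _
  have key : Real.log (1 - t) ≤ ξ * x + ξ * Real.log ξ - (ξ + 1) * Real.log (ξ + 1) := by
    have hA : Real.log ((1 - t) * (ξ + 1)) ≤ (1 - t) * (ξ + 1) - 1 :=
      Real.log_le_sub_one_of_pos (by positivity)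
    have hB : Real.log (t * (ξ + 1) / ξ) ≤ t * (ξ + 1) / ξ - 1 :=
      Real.log_le_sub_one_of_pos (by positivity)
    rw [Real.log_mul (ne_of_gt h1t) (ne_of_gt hξ1)] at hA
    rw [Real.log_div (by positivity) (ne_of_gt hξ),
        Real.log_mul (ne_of_gt ht0) (ne_of_gt hξ1)] at hB
    have hB' : ξ * (Real.log t + Real.log (ξ + 1) - Real.log ξ) ≤ ξ * (t * (ξ + 1) / ξ - 1) :=
      mul_le_mul_of_nonneg_left hB hξ.le
    have hdiv : ξ * (t * (ξ + 1) / ξ) = t * (ξ + 1) := by field_simp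
    rw [hlogt] at hB'
    nlinarith [hA, hB', hdiv]
  refine ⟨key, ?_⟩
  have h2 : Real.log (1 - t) ≤
      ξ * x - (-(ξ * Real.log ξ) + (ξ + 1) * Real.log (ξ + 1)) := by linarith
  have := Real.exp_le_exp.mpr h2
  rwa [Real.exp_log h1t] at this
end

section
/- Let n ≥ 1, let θ : Fin n → ℝ with θᵢ ≥ 0 for all i, and let q : Fin n → ℝ with 0 ≤ qᵢ ≤ 1 for all i. Then for every ξ > 0: 1 − ∏_{i} (qᵢ·e^{−θᵢ} + (1 − qᵢ)) ≤ exp(ξ·log ξ − (ξ+1)·log(ξ+1)) · ∏_{i} (qᵢ·e^{ξ·θᵢ} + (1 − qᵢ)). -/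
lemma key_ineq (ξ : ℝ) (hξ : 0 < ξ) (t : ℝ) (ht : 0 ≤ t) :
    1 - Real.exp (-t) ≤
      Real.exp (ξ * Real.log ξ - (ξ + 1) * Real.log (ξ + 1)) * Real.exp (ξ * t) := by
  set u := Real.exp (-t) with hu
  have hu0 : 0 < u := Real.exp_pos _
  rcases le_or_gt (1 - u) 0 with h | h
  · exact h.trans (by positivity)
  have hξ1 : 0 < ξ + 1 := by linarith
  have hp1 : (0:ℝ) < (ξ+1)*(1-u) := by positivity
  have hp2 : (0:ℝ) < (ξ+1)*u/ξ := by positivity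
  have hamgm := Real.geom_mean_le_arith_mean2_weighted
    (w₁ := 1/(ξ+1)) (w₂ := ξ/(ξ+1)) (p₁ := (ξ+1)*(1-u)) (p₂ := (ξ+1)*u/ξ)
    (by positivity) (by positivity) hp1.le hp2.le (by field_simp; ring)
  have hsum : 1/(ξ+1) * ((ξ+1)*(1-u)) + ξ/(ξ+1) * ((ξ+1)*u/ξ) = 1 := by
    field_simp; ring
  rw [hsum] at hamgm
  have hlog : 1/(ξ+1) * Real.log ((ξ+1)*(1-u)) + ξ/(ξ+1) * Real.log ((ξ+1)*u/ξ) ≤ 0 := by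
    have h0 : (0:ℝ) < ((ξ+1)*(1-u)) ^ (1/(ξ+1)) * ((ξ+1)*u/ξ) ^ (ξ/(ξ+1)) := by
      positivity
    have := Real.log_le_log h0 hamgm
    rw [Real.log_one] at this
    rwa [Real.log_mul (by positivity) (by positivity),
      Real.log_rpow hp1, Real.log_rpow hp2] at this
  have hlog2 : Real.log ((ξ+1)*(1-u)) + ξ * Real.log ((ξ+1)*u/ξ) ≤ 0 := by
    have := mul_le_mul_of_nonneg_left hlog hξ1.le
    have hne : (ξ+1) ≠ 0 := ne_of_gt hξ1
    field_simp at this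
    linarith [this]
  have e1 : Real.log ((ξ+1)*(1-u)) = Real.log (ξ+1) + Real.log (1-u) :=
    Real.log_mul (ne_of_gt hξ1) (ne_of_gt h)
  have e2 : Real.log ((ξ+1)*u/ξ) = Real.log (ξ+1) + Real.log u - Real.log ξ := by
    rw [Real.log_div (by positivity) (ne_of_gt hξ),
      Real.log_mul (ne_of_gt hξ1) (ne_of_gt hu0)]
  have hlogu : Real.log u = -t := Real.log_exp _
  have hfin : Real.log (1-u) ≤ ξ * Real.log ξ - (ξ+1) * Real.log (ξ+1) + ξ * t := by
    rw [e1, e2, hlogu] at hlog2; nlinarith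
  calc 1 - u = Real.exp (Real.log (1-u)) := (Real.exp_log h).symm
    _ ≤ Real.exp (ξ * Real.log ξ - (ξ+1) * Real.log (ξ+1) + ξ * t) := Real.exp_le_exp.2 hfin
    _ = _ := by rw [Real.exp_add]


open Finset in
/-- Equation 5: the marginal probability of a positive finding,
`P(f⁺) = 1 − ∏ᵢ (qᵢ·e^{−θᵢ} + (1 − qᵢ))`, is bounded above by the variational
upper bound `P(f⁺ | ξ) = e^{−f*(ξ)} · ∏ᵢ (qᵢ·e^{ξθᵢ} + (1 − qᵢ))`. -/
theorem stmt_7 (n : ℕ) (hn : 1 ≤ n) (θ q : Fin n → ℝ)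
    (hθ : ∀ i, 0 ≤ θ i) (hq0 : ∀ i, 0 ≤ q i) (hq1 : ∀ i, q i ≤ 1) :
    ∀ ξ : ℝ, 0 < ξ →
      1 - ∏ i, (q i * Real.exp (-θ i) + (1 - q i)) ≤
        Real.exp (ξ * Real.log ξ - (ξ + 1) * Real.log (ξ + 1)) *
          ∏ i, (q i * Real.exp (ξ * θ i) + (1 - q i)) := by
  intro ξ hξ
  classical
  set C := Real.exp (ξ * Real.log ξ - (ξ + 1) * Real.log (ξ + 1)) with hC
  -- weights
  set w : Finset (Fin n) → ℝ := fun t => (∏ i ∈ t, q i) * ∏ i ∈ Finset.univ \ t, (1 - q i)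
    with hw
  have hwnn : ∀ t, 0 ≤ w t := by
    intro t
    apply mul_nonneg (Finset.prod_nonneg fun i _ => hq0 i)
      (Finset.prod_nonneg fun i _ => by linarith [hq1 i])
  have e1 : ∏ i, (q i * Real.exp (-θ i) + (1 - q i))
      = ∑ t ∈ (Finset.univ : Finset (Fin n)).powerset,
          w t * Real.exp (-(∑ i ∈ t, θ i)) := by
    rw [Finset.prod_add]
    refine Finset.sum_congr rfl fun t _ => ?_
    rw [Finset.prod_mul_distrib, ← Real.exp_sum]
    simp [hw]
    ring
  have e2 : ∏ i, (q i * Real.exp (ξ * θ i) + (1 - q i))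
      = ∑ t ∈ (Finset.univ : Finset (Fin n)).powerset,
          w t * Real.exp (ξ * ∑ i ∈ t, θ i) := by
    rw [Finset.prod_add]
    refine Finset.sum_congr rfl fun t _ => ?_
    rw [Finset.prod_mul_distrib, ← Real.exp_sum]
    simp [hw, Finset.mul_sum]
    ring
  have e3 : (1:ℝ) = ∑ t ∈ (Finset.univ : Finset (Fin n)).powerset, w t := by
    have : (1:ℝ) = ∏ i : Fin n, (q i + (1 - q i)) := by simp
    rw [this, Finset.prod_add]
  rw [e1, e2, e3, ← Finset.sum_sub_distrib, Finset.mul_sum]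
  apply Finset.sum_le_sum
  intro t _
  have hΘ : 0 ≤ ∑ i ∈ t, θ i := Finset.sum_nonneg fun i _ => hθ i
  have := key_ineq ξ hξ _ hΘ
  calc w t - w t * Real.exp (-(∑ i ∈ t, θ i))
      = w t * (1 - Real.exp (-(∑ i ∈ t, θ i))) := by ring
    _ ≤ w t * (C * Real.exp (ξ * ∑ i ∈ t, θ i)) :=
        mul_le_mul_of_nonneg_left this (hwnn t)
    _ = C * (w t * Real.exp (ξ * ∑ i ∈ t, θ i)) := by ring
end

section
/- Let n, k ≥ 1, let θ : Fin k → Fin n → ℝ with θ_{ji} ≥ 0, let q : Fin n → ℝ with 0 ≤ qᵢ ≤ 1, and let ξ : Fin k → ℝ with ξⱼ > 0. Then Σ_{d ∈ {0,1}^n} [∏_{i} qᵢ^{dᵢ}·(1 − qᵢ)^{1 − dᵢ}] · ∏_{j} (1 − exp(−Σ_{i} θ_{ji}·dᵢ)) ≤ exp(−Σ_{j} f*(ξⱼ)) · ∏_{i} (qᵢ·exp(Σ_{j} ξⱼ·θ_{ji}) + (1 − qᵢ)), where f*(ξ) = −ξ·log ξ + (ξ+1)·log(ξ+1). -/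
open Finset in
lemma key_variational (x t : ℝ) (hx : 0 ≤ x) (ht : 0 < t) :
    1 - Real.exp (-x) ≤
      Real.exp (t * x - (-(t * Real.log t) + (t + 1) * Real.log (t + 1))) := by
  set u := Real.exp (-x) with hu
  have hu0 : 0 < u := Real.exp_pos _
  have hu1 : u ≤ 1 := Real.exp_le_one_iff.mpr (by linarith)
  rcases eq_or_lt_of_le hu1 with h1 | h1
  · rw [h1]; simp [Real.exp_nonneg]
  · have h2 : 0 < 1 - u := by linarith
    rw [← Real.log_le_iff_le_exp h2]
    have ht1 : 0 < t + 1 := by linarith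
    have hp1 : 0 < u * (t + 1) / t := by positivity
    have hp2 : 0 < (1 - u) * (t + 1) := by positivity
    have hw : t / (t + 1) + 1 / (t + 1) = 1 := by field_simp
    have amgm := Real.geom_mean_le_arith_mean2_weighted
      (by positivity) (by positivity) hp1.le hp2.le hw
    have hrhs : t / (t + 1) * (u * (t + 1) / t) + 1 / (t + 1) * ((1 - u) * (t + 1)) = 1 := by
      field_simp
      ring
    rw [hrhs] at amgm
    have hlog : t / (t + 1) * Real.log (u * (t + 1) / t)
        + 1 / (t + 1) * Real.log ((1 - u) * (t + 1)) ≤ 0 := by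
      have := Real.log_le_log (by positivity) amgm
      rwa [Real.log_mul (by positivity) (by positivity), Real.log_rpow hp1,
        Real.log_rpow hp2, Real.log_one] at this
    have hlog2 : t * Real.log (u * (t + 1) / t) + Real.log ((1 - u) * (t + 1)) ≤ 0 := by
      have := mul_le_mul_of_nonneg_left hlog ht1.le
      field_simp at this ⊢
      linarith
    have e1 : Real.log (u * (t + 1) / t) = Real.log u + Real.log (t + 1) - Real.log t := by
      rw [Real.log_div (by positivity) (by positivity), Real.log_mul hu0.ne' ht1.ne']
    have e2 : Real.log ((1 - u) * (t + 1)) = Real.log (1 - u) + Real.log (t + 1) := by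
      rw [Real.log_mul h2.ne' ht1.ne']
    have e3 : Real.log u = -x := Real.log_exp _
    rw [e1, e2, e3] at hlog2
    nlinarith [hlog2]

open Finset in
/-- Equation 7: the exact marginal probability of `k` positive findings in a noisy-or
network is bounded above by the joint variational upper bound `P(F⁺ | Ξ)`, where
`f*(ξ) = −ξ·log ξ + (ξ+1)·log(ξ+1)`. -/
theorem stmt_8 (n k : ℕ) (hn : 1 ≤ n) (hk : 1 ≤ k)
    (θ : Fin k → Fin n → ℝ) (hθ : ∀ j i, 0 ≤ θ j i)
    (q : Fin n → ℝ) (hq0 : ∀ i, 0 ≤ q i) (hq1 : ∀ i, q i ≤ 1)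
    (ξ : Fin k → ℝ) (hξ : ∀ j, 0 < ξ j) :
    ∑ d : Fin n → Bool,
        (∏ i, (if d i then q i else 1 - q i)) *
          ∏ j, (1 - Real.exp (-∑ i, θ j i * (if d i then 1 else 0))) ≤
      Real.exp (-∑ j, (-(ξ j * Real.log (ξ j)) + (ξ j + 1) * Real.log (ξ j + 1))) *
        ∏ i, (q i * Real.exp (∑ j, ξ j * θ j i) + (1 - q i)) := by
  set F : ℝ := ∑ j, (-(ξ j * Real.log (ξ j)) + (ξ j + 1) * Real.log (ξ j + 1)) with hF
  -- x j d : the loading of finding j given configuration d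
  have hxnn : ∀ (j : Fin k) (d : Fin n → Bool),
      0 ≤ ∑ i, θ j i * (if d i then (1:ℝ) else 0) := by
    intro j d
    apply Finset.sum_nonneg
    intro i _
    have := hθ j i
    split <;> simp <;> linarith
  have hprior_nn : ∀ (d : Fin n → Bool) (i : Fin n),
      (0:ℝ) ≤ (if d i then q i else 1 - q i) := by
    intro d i; split; · exact hq0 i
    · linarith [hq1 i]
  -- Step 1: pointwise bound
  have step1 : ∀ d : Fin n → Bool,
      (∏ i, (if d i then q i else 1 - q i)) *
        ∏ j, (1 - Real.exp (-∑ i, θ j i * (if d i then 1 else 0))) ≤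
      (∏ i, (if d i then q i else 1 - q i)) *
        (Real.exp (-F) * Real.exp (∑ j, ξ j * ∑ i, θ j i * (if d i then 1 else 0))) := by
    intro d
    apply mul_le_mul_of_nonneg_left _ (Finset.prod_nonneg fun i _ => hprior_nn d i)
    have hb : ∏ j, (1 - Real.exp (-∑ i, θ j i * (if d i then (1:ℝ) else 0))) ≤
        ∏ j, Real.exp (ξ j * (∑ i, θ j i * (if d i then 1 else 0)) -
          (-(ξ j * Real.log (ξ j)) + (ξ j + 1) * Real.log (ξ j + 1))) := by
      apply Finset.prod_le_prod
      · intro j _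
        have := Real.exp_le_one_iff.mpr (neg_nonpos.mpr (hxnn j d))
        linarith
      · intro j _
        exact key_variational _ _ (hxnn j d) (hξ j)
    refine hb.trans_eq ?_
    rw [← Real.exp_sum, ← Real.exp_add]
    congr 1
    rw [Finset.sum_sub_distrib]
    rw [hF]
    ring_nf
  calc ∑ d : Fin n → Bool,
        (∏ i, (if d i then q i else 1 - q i)) *
          ∏ j, (1 - Real.exp (-∑ i, θ j i * (if d i then 1 else 0)))
      ≤ ∑ d : Fin n → Bool,
        (∏ i, (if d i then q i else 1 - q i)) *
          (Real.exp (-F) * Real.exp (∑ j, ξ j * ∑ i, θ j i * (if d i then 1 else 0))) :=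
        Finset.sum_le_sum fun d _ => step1 d
    _ = Real.exp (-F) * ∑ d : Fin n → Bool,
          ∏ i, (if d i then q i * Real.exp (∑ j, ξ j * θ j i) else 1 - q i) := by
        rw [Finset.mul_sum]
        apply Finset.sum_congr rfl
        intro d _
        have hswap : ∑ j, ξ j * ∑ i, θ j i * (if d i then (1:ℝ) else 0)
            = ∑ i, (∑ j, ξ j * θ j i) * (if d i then (1:ℝ) else 0) := by
          simp only [Finset.mul_sum]
          rw [Finset.sum_comm]
          apply Finset.sum_congr rfl; intro i _
          rw [Finset.sum_mul]
          apply Finset.sum_congr rfl; intro j _; ring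
        rw [hswap, Real.exp_sum, ← mul_assoc, mul_comm _ (Real.exp (-F)), mul_assoc,
          ← Finset.prod_mul_distrib]
        congr 1
        apply Finset.prod_congr rfl
        intro i _
        by_cases h : d i <;> simp [h]
    _ = Real.exp (-F) * ∏ i, (q i * Real.exp (∑ j, ξ j * θ j i) + (1 - q i)) := by
        congr 1
        have hps := Finset.prod_univ_sum (fun _ : Fin n => (Finset.univ : Finset Bool))
          (fun i b => if b then q i * Real.exp (∑ j, ξ j * θ j i) else 1 - q i)
        rw [Fintype.piFinset_univ] at hps
        rw [← hps]
        apply Finset.prod_congr rfl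
        intro i _
        simp
end

section
/- Let n ≥ 1, let A and B be disjoint finite index sets of findings, let a : (A ∪ B) → Fin n → ℝ (with each a_{ji} ∈ [0,1]) and q : Fin n → ℝ (with 0 ≤ qᵢ ≤ 1). Then Σ_{d ∈ {0,1}^n} [∏_{i} qᵢ^{dᵢ}·(1 − qᵢ)^{1 − dᵢ}] · [∏_{j ∈ A} (1 − ∏_{i : dᵢ = 1} a_{ji})] · [∏_{j ∈ B} ∏_{i : dᵢ = 1} a_{ji}] = Σ_{F' ⊆ A} (−1)^{|F'|} · ∏_{i} (qᵢ · ∏_{j ∈ B ∪ F'} a_{ji} + (1 − qᵢ)). -/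
set_option maxHeartbeats 1000000
set_option maxRecDepth 4000


open Finset in
/-- Quickscore-style inclusion–exclusion identity: the exact noisy-or evidence of
positive findings `A` and negative findings `B` equals an alternating sum over
subsets `F' ⊆ A` of products factorizing over diseases. -/
theorem stmt_9 {ι : Type*} [DecidableEq ι] (n : ℕ) (hn : 1 ≤ n)
    (A B : Finset ι) (hAB : Disjoint A B)
    (a : ι → Fin n → ℝ) (ha0 : ∀ j ∈ A ∪ B, ∀ i, 0 ≤ a j i)
    (ha1 : ∀ j ∈ A ∪ B, ∀ i, a j i ≤ 1)
    (q : Fin n → ℝ) (hq0 : ∀ i, 0 ≤ q i) (hq1 : ∀ i, q i ≤ 1) :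
    ∑ d : Fin n → Bool,
        (∏ i, (if d i then q i else 1 - q i)) *
          (∏ j ∈ A, (1 - ∏ i ∈ Finset.univ.filter (fun i => d i = true), a j i)) *
          (∏ j ∈ B, ∏ i ∈ Finset.univ.filter (fun i => d i = true), a j i) =
      ∑ F' ∈ A.powerset,
        (-1 : ℝ) ^ F'.card *
          ∏ i, (q i * ∏ j ∈ B ∪ F', a j i + (1 - q i)) := by
  classical
  -- Expand the product over A by inclusion-exclusion
  have expand : ∀ d : Fin n → Bool,
      (∏ j ∈ A, (1 - ∏ i ∈ Finset.univ.filter (fun i => d i = true), a j i))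
        = ∑ F' ∈ A.powerset, (-1:ℝ)^F'.card *
            ∏ j ∈ F', ∏ i ∈ Finset.univ.filter (fun i => d i = true), a j i := by
    intro d
    have : ∀ j, (1 : ℝ) - ∏ i ∈ Finset.univ.filter (fun i => d i = true), a j i
        = (-(∏ i ∈ Finset.univ.filter (fun i => d i = true), a j i)) + 1 := by
      intro j; ring
    rw [Finset.prod_congr rfl (fun j _ => this j), Finset.prod_add]
    refine Finset.sum_congr rfl fun F' hF' => ?_
    rw [Finset.prod_const_one, mul_one,
      Finset.prod_congr rfl (fun j _ => (neg_one_mul (∏ i ∈ Finset.univ.filter (fun i => d i = true), a j i)).symm),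
      Finset.prod_mul_distrib, Finset.prod_const]
  simp_rw [expand, Finset.mul_sum, Finset.sum_mul]
  rw [Finset.sum_comm]
  refine Finset.sum_congr rfl fun F' hF' => ?_
  have hF'A : F' ⊆ A := Finset.mem_powerset.mp hF'
  have hdisj : Disjoint B F' := (hAB.symm.mono_right hF'A)
  -- combine products over F' and B into one over B ∪ F'
  have step : ∀ d : Fin n → Bool,
      (∏ i, (if d i then q i else 1 - q i)) *
        ((-1:ℝ)^F'.card * ∏ j ∈ F', ∏ i ∈ Finset.univ.filter (fun i => d i = true), a j i) *
        (∏ j ∈ B, ∏ i ∈ Finset.univ.filter (fun i => d i = true), a j i)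
      = (-1:ℝ)^F'.card *
          ∏ i, (if d i then q i * ∏ j ∈ B ∪ F', a j i else 1 - q i) := by
    intro d
    simp only [Finset.prod_union hdisj]
    have comm : ∀ s : Finset ι, (∏ j ∈ s, ∏ i ∈ Finset.univ.filter (fun i => d i = true), a j i)
        = ∏ i ∈ Finset.univ.filter (fun i => d i = true), ∏ j ∈ s, a j i := fun s =>
      Finset.prod_comm
    have filt : ∀ s : Finset ι, (∏ i ∈ Finset.univ.filter (fun i => d i = true), ∏ j ∈ s, a j i)
        = ∏ i, (if d i then ∏ j ∈ s, a j i else 1) := by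
      intro s
      rw [Finset.prod_filter]
    rw [comm B, comm F', filt B, filt F']
    rw [show (∏ i, (if d i then q i else 1 - q i)) *
          ((-1:ℝ)^F'.card * ∏ i, (if d i then ∏ j ∈ F', a j i else 1)) *
          (∏ i, (if d i then ∏ j ∈ B, a j i else 1))
        = (-1:ℝ)^F'.card * ((∏ i, (if d i then q i else 1 - q i)) *
            (∏ i, (if d i then ∏ j ∈ B, a j i else 1)) *
            (∏ i, (if d i then ∏ j ∈ F', a j i else 1))) by ring]
    congr 1
    rw [← Finset.prod_mul_distrib, ← Finset.prod_mul_distrib]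
    refine Finset.prod_congr rfl fun i _ => ?_
    by_cases h : d i <;> simp [h] <;> ring
  simp_rw [step]
  rw [← Finset.mul_sum]
  congr 1
  -- factorize the sum over d into a product over i
  have hb : ∀ (i : Fin n), (q i * ∏ j ∈ B ∪ F', a j i + (1 - q i))
      = ∑ b : Bool, (if b then q i * ∏ j ∈ B ∪ F', a j i else 1 - q i) := by
    intro i; simp [add_comm]
  calc ∑ d : Fin n → Bool, ∏ i, (if d i then q i * ∏ j ∈ B ∪ F', a j i else 1 - q i)
      = ∑ d ∈ Fintype.piFinset (fun _ : Fin n => (Finset.univ : Finset Bool)),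
          ∏ i, (if d i then q i * ∏ j ∈ B ∪ F', a j i else 1 - q i) := by
        rw [Fintype.piFinset_univ]
    _ = ∏ i, ∑ b : Bool, (if b then q i * ∏ j ∈ B ∪ F', a j i else 1 - q i) :=
        (Finset.prod_univ_sum (fun _ => (Finset.univ : Finset Bool))
          (fun i b => if b = true then q i * ∏ j ∈ B ∪ F', a j i else 1 - q i)).symm
    _ = ∏ i, (q i * ∏ j ∈ B ∪ F', a j i + (1 - q i)) := by
        exact Finset.prod_congr rfl fun i _ => (hb i).symm
end

section
/- Let n ≥ 1, θ : Fin n → ℝ with θᵢ ≥ 0, and q : Fin n → ℝ with 0 ≤ qᵢ ≤ 1. The function g(ξ) = ξ·log ξ − (ξ+1)·log(ξ+1) + Σ_{i} log(qᵢ·e^{ξ·θᵢ} + (1 − qᵢ)) is convex on (0, ∞). -/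
open Set Real

lemma aux_upos {q : ℝ} (hq0 : 0 ≤ q) (hq1 : q ≤ 1) (x : ℝ) :
    0 < q * Real.exp x + (1 - q) := by
  rcases lt_or_eq_of_le hq1 with h | h
  · have : 0 ≤ q * Real.exp x := mul_nonneg hq0 (Real.exp_pos x).le
    linarith
  · subst h
    have := Real.exp_pos x
    nlinarith

/-- Convexity of the cumulant-generating-function-type term. -/
lemma aux_convex_term {θ q : ℝ} (hq0 : 0 ≤ q) (hq1 : q ≤ 1) :
    ConvexOn ℝ Set.univ (fun ξ : ℝ => Real.log (q * Real.exp (ξ * θ) + (1 - q))) := by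
  set u : ℝ → ℝ := fun ξ => q * Real.exp (ξ * θ) + (1 - q) with hu
  have hupos : ∀ ξ : ℝ, 0 < u ξ := fun ξ => aux_upos hq0 hq1 _
  have hu' : ∀ ξ : ℝ, HasDerivAt u (q * θ * Real.exp (ξ * θ)) ξ := by
    intro ξ
    have h1 : HasDerivAt (fun ξ : ℝ => ξ * θ) θ ξ := by
      simpa using (hasDerivAt_id ξ).mul_const θ
    have h2 : HasDerivAt (fun ξ : ℝ => Real.exp (ξ * θ)) (Real.exp (ξ * θ) * θ) ξ := h1.exp
    have h3 := (h2.const_mul q).add_const (1 - q)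
    exact h3.congr_deriv (by ring)
  set f' : ℝ → ℝ := fun ξ => q * θ * Real.exp (ξ * θ) / u ξ with hf'def
  have hf' : ∀ ξ : ℝ, HasDerivAt (fun ξ => Real.log (u ξ)) (f' ξ) ξ := by
    intro ξ
    exact (hu' ξ).log (hupos ξ).ne'
  set f'' : ℝ → ℝ := fun ξ =>
    (q * θ * (Real.exp (ξ * θ) * θ) * u ξ - q * θ * Real.exp (ξ * θ) * (q * θ * Real.exp (ξ * θ))) /
      (u ξ) ^ 2 with hf''def
  have hf'' : ∀ ξ : ℝ, HasDerivAt f' (f'' ξ) ξ := by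
    intro ξ
    have hN : HasDerivAt (fun ξ : ℝ => q * θ * Real.exp (ξ * θ))
        (q * θ * (Real.exp (ξ * θ) * θ)) ξ := by
      have h1 : HasDerivAt (fun ξ : ℝ => ξ * θ) θ ξ := by
        simpa using (hasDerivAt_id ξ).mul_const θ
      exact (h1.exp).const_mul (q * θ)
    exact hN.div (hu' ξ) (hupos ξ).ne'
  refine convexOn_of_hasDerivWithinAt2_nonneg (f' := f') (f'' := f'') convex_univ ?_ ?_ ?_ ?_
  · exact fun ξ _ => ((hf' ξ).continuousAt).continuousWithinAt
  · intro ξ _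
    exact (hf' ξ).hasDerivWithinAt
  · intro ξ _
    exact (hf'' ξ).hasDerivWithinAt
  · intro ξ _
    have he := (Real.exp_pos (ξ * θ)).le
    have hun := (hupos ξ)
    apply div_nonneg _ (sq_nonneg _)
    have : q * θ * (Real.exp (ξ * θ) * θ) * u ξ -
        q * θ * Real.exp (ξ * θ) * (q * θ * Real.exp (ξ * θ)) =
        q * (1 - q) * θ ^ 2 * Real.exp (ξ * θ) := by
      simp only [hu]; ring
    rw [this]
    have h1q : 0 ≤ 1 - q := by linarith
    positivity

/-- Convexity of `ξ log ξ − (ξ+1) log (ξ+1)` on `(0, ∞)`. -/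
lemma aux_convex_ent :
    ConvexOn ℝ (Set.Ioi (0:ℝ))
      (fun ξ : ℝ => ξ * Real.log ξ - (ξ + 1) * Real.log (ξ + 1)) := by
  have hint : interior (Set.Ioi (0:ℝ)) = Set.Ioi 0 := interior_Ioi
  have hd : ∀ ξ : ℝ, ξ ∈ Set.Ioi (0:ℝ) →
      HasDerivAt (fun ξ : ℝ => ξ * Real.log ξ - (ξ + 1) * Real.log (ξ + 1))
        (Real.log ξ - Real.log (ξ + 1)) ξ := by
    intro ξ hξ
    have hξ0 : (0:ℝ) < ξ := hξ
    have h1 : HasDerivAt (fun ξ : ℝ => ξ * Real.log ξ) (Real.log ξ + 1) ξ := by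
      have := (hasDerivAt_id ξ).mul ((Real.hasDerivAt_log hξ0.ne'))
      exact this.congr_deriv (by simp [hξ0.ne'])
    have h2 : HasDerivAt (fun ξ : ℝ => (ξ + 1) * Real.log (ξ + 1)) (Real.log (ξ + 1) + 1) ξ := by
      have ha : HasDerivAt (fun ξ : ℝ => ξ + 1) 1 ξ := (hasDerivAt_id ξ).add_const 1
      have hb : HasDerivAt (fun ξ : ℝ => Real.log (ξ + 1)) (1 / (ξ + 1)) ξ := by
        simpa using ha.log (by linarith)
      have := ha.mul hb
      exact this.congr_deriv (by rw [one_mul, mul_one_div_cancel (by linarith)])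
    have := h1.sub h2
    exact this.congr_deriv (by ring)
  have hd2 : ∀ ξ : ℝ, ξ ∈ Set.Ioi (0:ℝ) →
      HasDerivAt (fun ξ : ℝ => Real.log ξ - Real.log (ξ + 1)) (1 / ξ - 1 / (ξ + 1)) ξ := by
    intro ξ hξ
    have hξ0 : (0:ℝ) < ξ := hξ
    have h1 : HasDerivAt (fun ξ : ℝ => Real.log ξ) (1 / ξ) ξ := by
      simpa [one_div] using Real.hasDerivAt_log hξ0.ne'
    have ha : HasDerivAt (fun ξ : ℝ => ξ + 1) 1 ξ := (hasDerivAt_id ξ).add_const 1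
    have h2 : HasDerivAt (fun ξ : ℝ => Real.log (ξ + 1)) (1 / (ξ + 1)) ξ := by
      simpa using ha.log (by linarith)
    exact h1.sub h2
  refine convexOn_of_hasDerivWithinAt2_nonneg (f' := fun ξ => Real.log ξ - Real.log (ξ + 1))
      (f'' := fun ξ => 1 / ξ - 1 / (ξ + 1)) (convex_Ioi 0) ?_ ?_ ?_ ?_
  · exact fun ξ hξ => ((hd ξ hξ).continuousAt).continuousWithinAt
  · intro ξ hξ
    rw [hint] at hξ ⊢
    exact (hd ξ hξ).hasDerivWithinAt
  · intro ξ hξ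
    rw [hint] at hξ ⊢
    exact (hd2 ξ hξ).hasDerivWithinAt
  · intro ξ hξ
    rw [hint] at hξ
    have hξ0 : (0:ℝ) < ξ := hξ
    have : 1 / (ξ + 1) ≤ 1 / ξ := by
      apply one_div_le_one_div_of_le hξ0; linarith
    linarith

open Finset in
/-- The log variational upper bound `g(ξ) = −f*(ξ) + Σᵢ log(qᵢ·e^{ξθᵢ} + (1 − qᵢ))`
is convex on `(0, ∞)`. -/
theorem stmt_12 (n : ℕ) (hn : 1 ≤ n) (θ q : Fin n → ℝ)
    (hθ : ∀ i, 0 ≤ θ i) (hq0 : ∀ i, 0 ≤ q i) (hq1 : ∀ i, q i ≤ 1) :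
    ConvexOn ℝ (Set.Ioi 0)
      (fun ξ : ℝ => ξ * Real.log ξ - (ξ + 1) * Real.log (ξ + 1) +
        ∑ i, Real.log (q i * Real.exp (ξ * θ i) + (1 - q i))) := by
  have hsum : ConvexOn ℝ (Set.Ioi (0:ℝ))
      (fun ξ : ℝ => ∑ i, Real.log (q i * Real.exp (ξ * θ i) + (1 - q i))) := by
    classical
    induction (Finset.univ : Finset (Fin n)) using Finset.induction with
    | empty => simpa using convexOn_const 0 (convex_Ioi (0:ℝ))
    | @insert a s ha ih =>
      simp only [Finset.sum_insert ha]
      exact ((aux_convex_term (hq0 _) (hq1 _)).subset (Set.subset_univ _)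
        (convex_Ioi 0)).add ih
  exact aux_convex_ent.add hsum
end

section
/- Let n ≥ 1, θ : Fin n → ℝ with θᵢ > 0 for all i, and q : Fin n → ℝ with 0 < qᵢ < 1. Then the function g(ξ) = ξ·log ξ − (ξ+1)·log(ξ+1) + Σ_{i} log(qᵢ·e^{ξ·θᵢ} + (1 − qᵢ)) attains a minimum on (0, ∞) at a unique point ξ^min > 0, characterized by the stationarity condition log(ξ^min/(1+ξ^min)) + Σ_{i} θᵢ/(pᵢ·e^{−ξ^min·θᵢ} + 1) = 0, where pᵢ = (1 − qᵢ)/qᵢ. -/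
open Finset Real Filter Set Topology

section aux
variable {n : ℕ} (θ q : Fin n → ℝ)

noncomputable def gVB (ξ : ℝ) : ℝ :=
  ξ * Real.log ξ - (ξ + 1) * Real.log (ξ + 1) +
    ∑ i, Real.log (q i * Real.exp (ξ * θ i) + (1 - q i))

noncomputable def hVB (ξ : ℝ) : ℝ :=
  Real.log (ξ / (1 + ξ)) + ∑ i, θ i / ((1 - q i) / q i * Real.exp (-(ξ * θ i)) + 1)

variable (hθ : ∀ i, 0 < θ i) (hq0 : ∀ i, 0 < q i) (hq1 : ∀ i, q i < 1)
include hθ hq0 hq1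

lemma denom1_pos (i : Fin n) (ξ : ℝ) : 0 < q i * Real.exp (ξ * θ i) + (1 - q i) := by
  have := hq0 i; have := hq1 i
  have : 0 < q i * Real.exp (ξ * θ i) := by positivity
  linarith

lemma denom2_pos (i : Fin n) (ξ : ℝ) :
    0 < (1 - q i) / q i * Real.exp (-(ξ * θ i)) + 1 := by
  have hqi := hq0 i
  have h1q : (0:ℝ) ≤ 1 - q i := by linarith [hq1 i]
  have h1 : (0:ℝ) ≤ (1 - q i) / q i * Real.exp (-(ξ * θ i)) := by positivity
  linarith

lemma term_eq (i : Fin n) (ξ : ℝ) :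
    θ i / ((1 - q i) / q i * Real.exp (-(ξ * θ i)) + 1) =
      q i * (θ i * Real.exp (ξ * θ i)) / (q i * Real.exp (ξ * θ i) + (1 - q i)) := by
  have hq := (hq0 i).ne'
  have hE : Real.exp (ξ * θ i) ≠ 0 := (Real.exp_pos _).ne'
  have hd1 := (denom1_pos θ q hθ hq0 hq1 i ξ).ne'
  have hd2 := (denom2_pos θ q hθ hq0 hq1 i ξ).ne'
  rw [Real.exp_neg] at hd2 ⊢
  rw [div_eq_div_iff hd2 hd1]
  field_simp
  ring

lemma hasDerivAt_gVB {ξ : ℝ} (hξ : 0 < ξ) :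
    HasDerivAt (gVB θ q) (hVB θ q ξ) ξ := by
  have h1 : HasDerivAt (fun x : ℝ => x * Real.log x) (Real.log ξ + 1) ξ :=
    Real.hasDerivAt_mul_log hξ.ne'
  have h2 : HasDerivAt (fun x : ℝ => (x + 1) * Real.log (x + 1)) (Real.log (ξ + 1) + 1) ξ := by
    have h := (Real.hasDerivAt_mul_log (x := ξ + 1) (by positivity)).comp ξ
      ((hasDerivAt_id ξ).add_const 1)
    simpa [Function.comp_def] using h
  have h3 : ∀ i : Fin n,
      HasDerivAt (fun x : ℝ => Real.log (q i * Real.exp (x * θ i) + (1 - q i)))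
        (q i * (θ i * Real.exp (ξ * θ i)) / (q i * Real.exp (ξ * θ i) + (1 - q i))) ξ := by
    intro i
    have he : HasDerivAt (fun x : ℝ => Real.exp (x * θ i)) (θ i * Real.exp (ξ * θ i)) ξ := by
      have h := (Real.hasDerivAt_exp (ξ * θ i)).comp ξ ((hasDerivAt_id ξ).mul_const (θ i))
      simpa [mul_comm, Function.comp_def] using h
    have hF : HasDerivAt (fun x : ℝ => q i * Real.exp (x * θ i) + (1 - q i))
        (q i * (θ i * Real.exp (ξ * θ i))) ξ := (he.const_mul (q i)).add_const _
    exact hF.log (denom1_pos θ q hθ hq0 hq1 i ξ).ne'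
  have hsum : HasDerivAt (fun x : ℝ => ∑ i, Real.log (q i * Real.exp (x * θ i) + (1 - q i)))
      (∑ i, q i * (θ i * Real.exp (ξ * θ i)) / (q i * Real.exp (ξ * θ i) + (1 - q i))) ξ :=
    HasDerivAt.fun_sum fun i _ => h3 i
  have h := (h1.sub h2).add hsum
  have heq : hVB θ q ξ =
      (Real.log ξ + 1 - (Real.log (ξ + 1) + 1)) +
        ∑ i, q i * (θ i * Real.exp (ξ * θ i)) / (q i * Real.exp (ξ * θ i) + (1 - q i)) := by
    unfold hVB
    rw [Real.log_div hξ.ne' (by positivity)]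
    have : ∀ i ∈ Finset.univ (α := Fin n), θ i / ((1 - q i) / q i * Real.exp (-(ξ * θ i)) + 1) =
        q i * (θ i * Real.exp (ξ * θ i)) / (q i * Real.exp (ξ * θ i) + (1 - q i)) :=
      fun i _ => term_eq θ q hθ hq0 hq1 i ξ
    rw [Finset.sum_congr rfl this, add_comm 1 ξ]
    ring
  rw [heq]
  exact h

end aux

section more
variable {n : ℕ} (θ q : Fin n → ℝ)
variable (hθ : ∀ i, 0 < θ i) (hq0 : ∀ i, 0 < q i) (hq1 : ∀ i, q i < 1)
include hθ hq0 hq1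

lemma hVB_strictMonoOn : StrictMonoOn (hVB θ q) (Set.Ioi 0) := by
  intro a ha b hb hab
  have ha' : (0:ℝ) < a := ha
  have hb' : (0:ℝ) < b := hb
  have h1 : Real.log (a / (1 + a)) < Real.log (b / (1 + b)) := by
    apply Real.log_lt_log (by positivity)
    rw [div_lt_div_iff₀ (by positivity) (by positivity)]
    nlinarith
  have h2 : ∀ i ∈ Finset.univ (α := Fin n),
      θ i / ((1 - q i) / q i * Real.exp (-(a * θ i)) + 1) ≤
      θ i / ((1 - q i) / q i * Real.exp (-(b * θ i)) + 1) := by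
    intro i _
    have hqi := hq0 i
    have h1q : (0:ℝ) ≤ 1 - q i := by linarith [hq1 i]
    have hp : (0:ℝ) ≤ (1 - q i) / q i := by positivity
    have hexp : Real.exp (-(b * θ i)) ≤ Real.exp (-(a * θ i)) :=
      Real.exp_le_exp.mpr (by nlinarith [hθ i])
    have hden : (1 - q i) / q i * Real.exp (-(b * θ i)) + 1 ≤
        (1 - q i) / q i * Real.exp (-(a * θ i)) + 1 := by nlinarith
    exact div_le_div_of_nonneg_left (le_of_lt (hθ i))
      (denom2_pos θ q hθ hq0 hq1 i b) hden
  have := Finset.sum_le_sum h2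
  unfold hVB
  linarith

lemma hVB_continuousAt {ξ : ℝ} (hξ : 0 < ξ) : ContinuousAt (hVB θ q) ξ := by
  apply ContinuousAt.add
  · apply ContinuousAt.log
    · exact (continuousAt_id.div (continuousAt_const.add continuousAt_id) (by positivity))
    · positivity
  · apply Continuous.continuousAt
    apply continuous_finset_sum
    intro i _
    exact Continuous.div continuous_const
      ((continuous_const.mul
        (Real.continuous_exp.comp (continuous_id.mul continuous_const).neg)).add
        continuous_const)
      (fun x => (denom2_pos θ q hθ hq0 hq1 i x).ne')

lemma hVB_tendsto : Tendsto (hVB θ q) atTop (nhds (∑ i, θ i)) := by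
  have hlog : Tendsto (fun x : ℝ => Real.log (x / (1 + x))) atTop (nhds 0) := by
    have h0 : Tendsto (fun x : ℝ => (1 + x)⁻¹) atTop (nhds 0) :=
      tendsto_inv_atTop_zero.comp (tendsto_atTop_add_const_left atTop 1 tendsto_id)
    have h1 : Tendsto (fun x : ℝ => 1 - (1 + x)⁻¹) atTop (nhds 1) := by
      simpa using (tendsto_const_nhds (x := (1:ℝ)) (f := atTop)).sub h0
    have heq : ∀ᶠ x : ℝ in atTop, 1 - (1 + x)⁻¹ = x / (1 + x) := by
      filter_upwards [eventually_gt_atTop 0] with x hx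
      field_simp
      ring
    have h2 : Tendsto (fun x : ℝ => x / (1 + x)) atTop (nhds 1) := h1.congr' heq
    have h3 := (Real.continuousAt_log (by norm_num : (1:ℝ) ≠ 0)).tendsto.comp h2
    simpa [Function.comp_def] using h3
  have hsum : Tendsto (fun x : ℝ => ∑ i, θ i / ((1 - q i) / q i * Real.exp (-(x * θ i)) + 1))
      atTop (nhds (∑ i, θ i)) := by
    have : ∀ i : Fin n, Tendsto (fun x : ℝ => θ i / ((1 - q i) / q i * Real.exp (-(x * θ i)) + 1))
        atTop (nhds (θ i)) := by
      intro i
      have hexp : Tendsto (fun x : ℝ => Real.exp (-(x * θ i))) atTop (nhds 0) := by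
        apply Real.tendsto_exp_atBot.comp
        apply tendsto_neg_atBot_iff.mpr
        exact Tendsto.atTop_mul_const (hθ i) tendsto_id
      have hden : Tendsto (fun x : ℝ => (1 - q i) / q i * Real.exp (-(x * θ i)) + 1)
          atTop (nhds 1) := by
        have := (hexp.const_mul ((1 - q i) / q i)).add_const 1
        simpa using this
      have := (tendsto_const_nhds (x := θ i)).div hden one_ne_zero
      simpa [Pi.div_def] using this
    have := tendsto_finset_sum Finset.univ (fun i _ => this i)
    exact this
  have := hlog.add hsum
  rw [zero_add] at this
  exact this

end more


open Finset in
/-- The log variational bound `g` attains a minimum on `(0, ∞)` at a unique point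
`ξ^min`, characterized by the stationarity condition
`log(ξ^min/(1+ξ^min)) + Σᵢ θᵢ/(pᵢ·e^{−ξ^min·θᵢ} + 1) = 0` with `pᵢ = (1 − qᵢ)/qᵢ`. -/
theorem stmt_14 (n : ℕ) (hn : 1 ≤ n) (θ q : Fin n → ℝ)
    (hθ : ∀ i, 0 < θ i) (hq0 : ∀ i, 0 < q i) (hq1 : ∀ i, q i < 1) :
    ∃! ξm : ℝ, 0 < ξm ∧
      (∀ ξ : ℝ, 0 < ξ →
        ξm * Real.log ξm - (ξm + 1) * Real.log (ξm + 1) +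
            ∑ i, Real.log (q i * Real.exp (ξm * θ i) + (1 - q i)) ≤
          ξ * Real.log ξ - (ξ + 1) * Real.log (ξ + 1) +
            ∑ i, Real.log (q i * Real.exp (ξ * θ i) + (1 - q i))) ∧
      Real.log (ξm / (1 + ξm)) +
          ∑ i, θ i / ((1 - q i) / q i * Real.exp (-(ξm * θ i)) + 1) = 0 := by
  have hne : Nonempty (Fin n) := ⟨⟨0, hn⟩⟩
  have hS : 0 < ∑ i, θ i := Finset.sum_pos (fun i _ => hθ i) Finset.univ_nonempty
  -- a small point where hVB is negative
  set a : ℝ := Real.exp (-(∑ i, θ i + 1)) with ha_def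
  have ha_pos : 0 < a := Real.exp_pos _
  have hVBa : hVB θ q a < 0 := by
    have hlog : Real.log (a / (1 + a)) < -(∑ i, θ i + 1) := by
      rw [Real.log_div ha_pos.ne' (by positivity), ha_def, Real.log_exp]
      have : 0 < Real.log (1 + Real.exp (-(∑ i, θ i + 1))) :=
        Real.log_pos (by linarith [Real.exp_pos (-(∑ i, θ i + 1))])
      linarith
    have hsum : (∑ i, θ i / ((1 - q i) / q i * Real.exp (-(a * θ i)) + 1)) ≤ ∑ i, θ i := by
      apply Finset.sum_le_sum
      intro i _
      have hqi := hq0 i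
      have h1q : (0:ℝ) ≤ 1 - q i := by linarith [hq1 i]
      have hden : (1:ℝ) ≤ (1 - q i) / q i * Real.exp (-(a * θ i)) + 1 := by
        have : (0:ℝ) ≤ (1 - q i) / q i * Real.exp (-(a * θ i)) := by positivity
        linarith
      exact div_le_self (le_of_lt (hθ i)) hden
    unfold hVB
    linarith
  -- a large point where hVB is positive
  obtain ⟨b, hVBb, hab⟩ : ∃ b : ℝ, 0 < hVB θ q b ∧ a < b := by
    have hev : ∀ᶠ x : ℝ in atTop, 0 < hVB θ q x :=
      (hVB_tendsto θ q hθ hq0 hq1).eventually (eventually_gt_nhds hS)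
    exact (hev.and (eventually_gt_atTop a)).exists
  have hb_pos : 0 < b := ha_pos.trans hab
  -- IVT
  have hcont : ContinuousOn (hVB θ q) (Set.Icc a b) := fun x hx =>
    (hVB_continuousAt θ q hθ hq0 hq1 (lt_of_lt_of_le ha_pos hx.1)).continuousWithinAt
  obtain ⟨ξm, hξm_mem, hξm_zero⟩ :=
    intermediate_value_Icc (le_of_lt hab) hcont
      (Set.mem_Icc.mpr ⟨le_of_lt hVBa, le_of_lt hVBb⟩)
  have hξm_pos : 0 < ξm := lt_of_lt_of_le ha_pos hξm_mem.1
  have hξmIoi : ξm ∈ Set.Ioi (0:ℝ) := hξm_pos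
  have hsm := hVB_strictMonoOn θ q hθ hq0 hq1
  -- monotonicity of gVB
  have hmono : StrictMonoOn (gVB θ q) (Set.Ici ξm) := by
    apply strictMonoOn_of_deriv_pos (convex_Ici _)
    · intro x hx
      exact (hasDerivAt_gVB θ q hθ hq0 hq1
        (lt_of_lt_of_le hξm_pos hx)).continuousAt.continuousWithinAt
    · intro x hx
      rw [interior_Ici] at hx
      rw [(hasDerivAt_gVB θ q hθ hq0 hq1 (hξm_pos.trans hx)).deriv]
      have := hsm hξmIoi (hξm_pos.trans hx) hx
      rwa [hξm_zero] at this
  have hanti : StrictAntiOn (gVB θ q) (Set.Ioc 0 ξm) := by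
    apply strictAntiOn_of_deriv_neg (convex_Ioc _ _)
    · intro x hx
      exact (hasDerivAt_gVB θ q hθ hq0 hq1 hx.1).continuousAt.continuousWithinAt
    · intro x hx
      rw [interior_Ioc] at hx
      rw [(hasDerivAt_gVB θ q hθ hq0 hq1 hx.1).deriv]
      have := hsm hx.1 hξmIoi hx.2
      rwa [hξm_zero] at this
  refine ⟨ξm, ⟨hξm_pos, ?_, hξm_zero⟩, ?_⟩
  · intro ξ hξ
    show gVB θ q ξm ≤ gVB θ q ξ
    rcases le_total ξ ξm with h | h
    · exact hanti.antitoneOn ⟨hξ, h⟩ ⟨hξm_pos, le_refl _⟩ h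
    · exact hmono.monotoneOn (Set.self_mem_Ici) h h
  · rintro y ⟨hy0, -, hyst⟩
    exact hsm.injOn hy0 hξmIoi (by rw [show hVB θ q y = 0 from hyst, hξm_zero])
end
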